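/- Let F be a field of characteristic zero and let X_n^{(k)}, k = 0,…,r−1, be the impulse sequences of a non-degenerate linear recurrence of order r whose minimal polynomial has distinct roots α_1,…,α_s with multiplicities m_1,…,m_s (Σ m_l = r). Then for every n ≥ 1, the (r−1) × (r−1) determinant D = det( X_{hn}^{(k)} )_{h=1,…,r−1; k=1,…,r−1} equals n^{Σ_{l=1}^{s} C(m_l,2)} · ∏_{l=1}^{s} α_l^{C(m_l,2)(n−1)} · ∏_{1 ≤ i < j ≤ s} ((α_j^n − α_i^n)/(α_j − α_i))^{m_i m_j}. -/

import Mathlib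

open Polynomial Finset Matrix

section Aux
variable {F : Type*} [Field F]

lemma det_tri {κ : Type*} [Fintype κ] [DecidableEq κ] {R : ℕ}
    (e : κ ≃ Fin R) (M : Matrix κ κ F)
    (h : ∀ c c', e c' < e c → M c c' = 0) :
    M.det = ∏ c, M c c := by
  rw [← Matrix.det_submatrix_equiv_self e.symm M,
    Matrix.det_of_upperTriangular (by
      intro i j hij
      exact h _ _ (by simpa using hij))]
  exact Equiv.prod_comp e.symm fun c => M c c

noncomputable def cc (F : Type*) [Field F] (ν u t : ℕ) : F :=
  ((((X : F[X]) + 1) ^ ν - 1) ^ u).coeff t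

lemma X_dvd_z (ν : ℕ) : (X : F[X]) ∣ ((X + 1) ^ ν - 1) := by
  rw [Polynomial.X_dvd_iff]
  simp [coeff_X_add_one_pow]

lemma cc_eq_zero {ν u t : ℕ} (h : t < u) : cc F ν u t = 0 := by
  have : (X : F[X]) ^ u ∣ (((X : F[X]) + 1) ^ ν - 1) ^ u :=
    pow_dvd_pow_of_dvd (X_dvd_z ν) u
  exact Polynomial.X_pow_dvd_iff.1 this t h

lemma cc_diag (ν t : ℕ) : cc F ν t t = (ν : F) ^ t := by
  obtain ⟨w, hw⟩ := X_dvd_z (F := F) ν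
  have hw0 : w.coeff 0 = (ν : F) := by
    have h1 : (((X : F[X]) + 1) ^ ν - 1).coeff 1 = (ν : F) := by
      simp [coeff_X_add_one_pow, coeff_one]
    rw [hw] at h1
    simpa using (Polynomial.coeff_X_mul w 0).symm.trans h1
  have : cc F ν t t = (w ^ t).coeff 0 := by
    rw [cc, hw, mul_pow]
    simpa using Polynomial.coeff_X_pow_mul (w ^ t) t 0
  rw [this, ← Polynomial.constantCoeff_apply, map_pow, Polynomial.constantCoeff_apply, hw0]

lemma choose_mul_eq_sum (h ν t : ℕ) :
    ((h * ν).choose t : F) = ∑ u ∈ range (t + 1), (h.choose u : F) * cc F ν u t := by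
  have key : ((X + 1 : F[X]) ^ ν) ^ h
      = ∑ u ∈ range (h + 1), ((X + 1 : F[X]) ^ ν - 1) ^ u * (1 : F[X]) ^ (h - u) * (h.choose u : F[X]) := by
    have := add_pow ((X + 1 : F[X]) ^ ν - 1) 1 h
    rw [sub_add_cancel] at this
    exact this
  -- take coefficient t on both sides
  have hL : (((X + 1 : F[X]) ^ ν) ^ h).coeff t = ((h * ν).choose t : F) := by
    rw [← pow_mul, coeff_X_add_one_pow, mul_comm]
  have hR : ∀ u, (((X + 1 : F[X]) ^ ν - 1) ^ u * (1 : F[X]) ^ (h - u) * (h.choose u : F[X])).coeff t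
      = (h.choose u : F) * cc F ν u t := by
    intro u
    rw [one_pow, mul_one, ← Polynomial.C_eq_natCast, Polynomial.coeff_mul_C, cc, mul_comm]
  have hsum : ((h * ν).choose t : F) = ∑ u ∈ range (h + 1), (h.choose u : F) * cc F ν u t := by
    rw [← hL, key, Polynomial.finset_sum_coeff]
    exact Finset.sum_congr rfl fun u _ => hR u
  rw [hsum]
  -- now change the summation range from h+1 to t+1
  have e1 : ∑ u ∈ range (h + 1), (h.choose u : F) * cc F ν u t
      = ∑ u ∈ range (h + 1 + (t + 1)), (h.choose u : F) * cc F ν u t := by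
    refine Finset.sum_subset (Finset.range_subset_range.2 (by omega)) fun x _ hx => ?_
    have hx' : h < x := by simp only [Finset.mem_range] at hx ⊢; omega
    simp [Nat.choose_eq_zero_of_lt hx']
  have e2 : ∑ u ∈ range (t + 1), (h.choose u : F) * cc F ν u t
      = ∑ u ∈ range (h + 1 + (t + 1)), (h.choose u : F) * cc F ν u t := by
    refine Finset.sum_subset (Finset.range_subset_range.2 (by omega)) fun x _ hx => ?_
    have hx' : t < x := by simp only [Finset.mem_range] at hx ⊢; omega
    simp [cc_eq_zero hx']
  rw [e1, ← e2]

end Aux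

section Tay
variable {F : Type*} [Field F]

lemma taylor_pow_X_sub_C (a : F) (mm : ℕ) :
    Polynomial.taylor a ((X - C a) ^ mm) = X ^ mm := by
  rw [Polynomial.taylor_apply, Polynomial.pow_comp, Polynomial.sub_comp,
    Polynomial.X_comp, Polynomial.C_comp, add_sub_cancel_right]

lemma taylor_coeff_sum {R : ℕ} (a : F) (q : F[X]) (hq : q.natDegree < R) (t : ℕ) :
    (Polynomial.taylor a q).coeff t
      = ∑ k : Fin R, q.coeff k * (a ^ ((k : ℕ) - t) * ((k : ℕ).choose t : F)) := by
  rw [Fin.sum_univ_eq_sum_range fun k => q.coeff k * (a ^ (k - t) * (k.choose t : F))]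
  conv_lhs => rw [q.as_sum_range' R hq]
  rw [map_sum, Polynomial.finset_sum_coeff]
  refine Finset.sum_congr rfl fun k _ => ?_
  rw [← Polynomial.C_mul_X_pow_eq_monomial, Polynomial.taylor_apply, Polynomial.mul_comp,
    Polynomial.C_comp, Polynomial.pow_comp, Polynomial.X_comp, Polynomial.coeff_C_mul,
    Polynomial.coeff_X_add_C_pow]

lemma taylor_coeff_zero_of_dvd {a : F} {mm t : ℕ} (ht : t < mm) {d : F[X]}
    (hdvd : (X - C a) ^ mm ∣ d) : (Polynomial.taylor a d).coeff t = 0 := by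
  obtain ⟨w, rfl⟩ := hdvd
  rw [Polynomial.taylor_mul, taylor_pow_X_sub_C, Polynomial.coeff_X_pow_mul']
  simp [Nat.not_le.2 ht]

lemma taylor_coeff_diag (a : F) (t : ℕ) (Q : F[X]) :
    (Polynomial.taylor a ((X - C a) ^ t * Q)).coeff t = Q.eval a := by
  rw [Polynomial.taylor_mul, taylor_pow_X_sub_C, Polynomial.coeff_X_pow_mul']
  simp [Polynomial.taylor_coeff_zero]

lemma prod_pow_val (x : F) (mm : ℕ) : (∏ t : Fin mm, x ^ (t : ℕ)) = x ^ mm.choose 2 := by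
  rw [Finset.prod_pow_eq_pow_sum]
  congr 1
  rw [Fin.sum_univ_eq_sum_range fun t => t]
  have h2 := Finset.sum_range_id_mul_two mm
  have := Nat.choose_two_right mm
  omega

end Tay

section Rho
variable {s : ℕ} (m : Fin s → ℕ)

def off (l : Fin s) : ℕ := ∑ i ∈ Finset.Iio l, m i

def rho (c : Σ l : Fin s, Fin (m l)) : ℕ := off m c.1 + c.2

variable {m}

lemma off_add_le {l l' : Fin s} (h : l < l') : off m l + m l ≤ off m l' := by
  have hsub : insert l (Finset.Iio l) ⊆ Finset.Iio l' := by
    intro x hx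
    simp only [Finset.mem_insert, Finset.mem_Iio] at hx ⊢
    rcases hx with rfl | hx
    · exact h
    · exact hx.trans h
  calc off m l + m l = ∑ i ∈ insert l (Finset.Iio l), m i := by
        rw [Finset.sum_insert (by simp), add_comm]; rfl
    _ ≤ _ := Finset.sum_le_sum_of_subset hsub

lemma rho_lt_sum (c : Σ l : Fin s, Fin (m l)) : rho m c < ∑ l, m l := by
  have h1 : off m c.1 + m c.1 ≤ ∑ l, m l := by
    calc off m c.1 + m c.1 = ∑ i ∈ insert c.1 (Finset.Iio c.1), m i := by
          rw [Finset.sum_insert (by simp), add_comm]; rfl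
      _ ≤ _ := Finset.sum_le_sum_of_subset (Finset.subset_univ _)
  have := c.2.isLt
  unfold rho; omega

lemma rho_lt_of_fst_lt {c c' : Σ l : Fin s, Fin (m l)} (h : c.1 < c'.1) :
    rho m c < rho m c' := by
  have h1 := off_add_le (m := m) h
  have := c.2.isLt
  unfold rho; omega

lemma rho_lt_cases {c c' : Σ l : Fin s, Fin (m l)} (h : rho m c < rho m c') :
    c.1 < c'.1 ∨ (c.1 = c'.1 ∧ (c.2 : ℕ) < (c'.2 : ℕ)) := by
  rcases lt_trichotomy c.1 c'.1 with h1 | h1 | h1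
  · exact Or.inl h1
  · refine Or.inr ⟨h1, ?_⟩
    have : off m c.1 = off m c'.1 := by rw [h1]
    unfold rho at h; omega
  · exact absurd (rho_lt_of_fst_lt h1) (by omega)

lemma rho_injective : Function.Injective (rho m) := by
  rintro ⟨l, t⟩ ⟨l', t'⟩ h
  have hl : l = l' := by
    rcases lt_trichotomy l l' with h1 | h1 | h1
    · exact absurd (rho_lt_of_fst_lt (c := ⟨l,t⟩) (c' := ⟨l',t'⟩) h1) (by omega)
    · exact h1
    · exact absurd (rho_lt_of_fst_lt (c := ⟨l',t'⟩) (c' := ⟨l,t⟩) h1) (by omega)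
  subst hl
  have : (t : ℕ) = t' := by unfold rho at h; dsimp only at h; omega
  exact congrArg _ (Fin.ext this)

end Rho

section DetS
variable {F : Type*} [Field F] {s : ℕ} {m : Fin s → ℕ}

lemma detS (β : Fin s → F) {r : ℕ} (e : (Σ l : Fin s, Fin (m l)) ≃ Fin r)
    (he : ∀ c, ((e c) : ℕ) = rho m c) :
    (Matrix.of fun c c' : Σ l : Fin s, Fin (m l) =>
        β c'.1 ^ (rho m c - (c'.2 : ℕ)) * (((rho m c).choose (c'.2 : ℕ) : ℕ) : F)).det
      = ∏ i : Fin s, ∏ j ∈ Finset.Ioi i, (β j - β i) ^ (m i * m j) := by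
  classical
  set S : Matrix _ _ F := Matrix.of fun c c' : Σ l : Fin s, Fin (m l) =>
    β c'.1 ^ (rho m c - (c'.2 : ℕ)) * (((rho m c).choose (c'.2 : ℕ) : ℕ) : F) with hS
  set g : (Σ l : Fin s, Fin (m l)) → F[X] := fun c =>
    (X - C (β c.1)) ^ (c.2 : ℕ) * ∏ i ∈ Finset.Iio c.1, (X - C (β i)) ^ m i with hg
  have hgmonic : ∀ c, (g c).Monic := fun c =>
    ((monic_X_sub_C _).pow _).mul
      (monic_prod_of_monic _ _ fun i _ => (monic_X_sub_C _).pow _)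
  have hgdeg : ∀ c, (g c).natDegree = rho m c := by
    intro c
    rw [hg]
    rw [((monic_X_sub_C (β c.1)).pow _).natDegree_mul
      (monic_prod_of_monic _ _ fun i _ => (monic_X_sub_C _).pow _)]
    rw [(monic_X_sub_C _).natDegree_pow, natDegree_X_sub_C,
      natDegree_prod_of_monic _ _ (fun i _ => (monic_X_sub_C _).pow _)]
    simp only [(monic_X_sub_C _).natDegree_pow, natDegree_X_sub_C, mul_one]
    rw [rho, off, add_comm]
  have hlt : ∀ {c c' : Σ l : Fin s, Fin (m l)}, e c' < e c → rho m c' < rho m c := by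
    intro c c' hlt
    rw [← he c, ← he c']
    exact hlt
  set B : Matrix _ _ F := Matrix.of (fun c c' : Σ l : Fin s, Fin (m l) =>
    (g c).coeff (rho m c')) with hB
  have hBdet : B.det = 1 := by
    rw [← Matrix.det_transpose, det_tri e _ (fun c c' h => by
      show (g c').coeff (rho m c) = 0
      exact Polynomial.coeff_eq_zero_of_natDegree_lt (by rw [hgdeg]; exact hlt h))]
    refine Finset.prod_eq_one fun c _ => ?_
    show (g c).coeff (rho m c) = 1
    rw [← hgdeg c]; exact (hgmonic c).coeff_natDegree
  have hBS : B * S = Matrix.of fun c c' : Σ l : Fin s, Fin (m l) =>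
        (Polynomial.taylor (β c'.1) (g c)).coeff (c'.2 : ℕ) := by
    ext c c'
    simp only [hB, hS, Matrix.mul_apply, Matrix.of_apply]
    rw [taylor_coeff_sum (R := r) (β c'.1) (g c)
      (by rw [hgdeg, ← he c]; exact (e c).isLt) (c'.2 : ℕ)]
    rw [← Equiv.sum_comp e (fun k : Fin r => (g c).coeff k *
      (β c'.1 ^ ((k : ℕ) - (c'.2 : ℕ)) * (((k : ℕ).choose (c'.2 : ℕ) : ℕ) : F)))]
    exact Finset.sum_congr rfl fun c'' _ => by rw [he c'']
  have hNtri : ∀ c c' : Σ l : Fin s, Fin (m l), e c' < e c →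
      (Polynomial.taylor (β c'.1) (g c)).coeff (c'.2 : ℕ) = 0 := by
    intro c c' h
    refine taylor_coeff_zero_of_dvd (mm := (c'.2 : ℕ) + 1) (Nat.lt_succ_self _) ?_
    rcases rho_lt_cases (hlt h) with h3 | ⟨h3, h4⟩
    · refine Dvd.dvd.mul_left ?_ _
      refine dvd_trans (pow_dvd_pow _ c'.2.isLt) (Finset.dvd_prod_of_mem _ ?_)
      simpa using h3
    · have hββ : β c'.1 = β c.1 := by rw [h3]
      rw [hββ]
      exact Dvd.dvd.mul_right (pow_dvd_pow _ h4) _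
  have hNdiag : ∀ c : Σ l : Fin s, Fin (m l),
      (Polynomial.taylor (β c.1) (g c)).coeff (c.2 : ℕ)
        = ∏ i ∈ Finset.Iio c.1, (β c.1 - β i) ^ m i := by
    intro c
    rw [hg]
    rw [taylor_coeff_diag]
    simp [Polynomial.eval_prod]
  calc S.det = (B * S).det := by rw [Matrix.det_mul, hBdet, one_mul]
    _ = ∏ c : Σ l : Fin s, Fin (m l),
        (Polynomial.taylor (β c.1) (g c)).coeff (c.2 : ℕ) := by
        rw [hBS]; exact det_tri e _ (fun c c' h => hNtri c c' h)
    _ = ∏ c : Σ l : Fin s, Fin (m l), ∏ i ∈ Finset.Iio c.1, (β c.1 - β i) ^ m i :=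
        Finset.prod_congr rfl fun c _ => hNdiag c
    _ = ∏ l : Fin s, ∏ i ∈ Finset.Iio l, (β l - β i) ^ (m i * m l) := by
        rw [← Finset.univ_sigma_univ, Finset.prod_sigma]
        refine Finset.prod_congr rfl fun l _ => ?_
        dsimp only
        rw [Finset.prod_const]
        simp only [Finset.card_univ, Fintype.card_fin]
        rw [← Finset.prod_pow]
        exact Finset.prod_congr rfl fun i _ => by rw [← pow_mul]
    _ = ∏ i : Fin s, ∏ j ∈ Finset.Ioi i, (β j - β i) ^ (m i * m j) := by
        refine Finset.prod_comm' fun x y => ?_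
        simp
end DetS

section DetW
variable {F : Type*} [Field F] {s : ℕ} {m : Fin s → ℕ}

lemma detW (α : Fin s → F) (hα0 : ∀ l, α l ≠ 0) {r : ℕ}
    (e : (Σ l : Fin s, Fin (m l)) ≃ Fin r)
    (he : ∀ c, ((e c) : ℕ) = rho m c) (ν : ℕ) :
    (Matrix.of fun c c' : Σ l : Fin s, Fin (m l) =>
        α c'.1 ^ (rho m c * ν - (c'.2 : ℕ)) * (((rho m c * ν).choose (c'.2 : ℕ) : ℕ) : F)).det
      = (∏ l, (ν : F) ^ ((m l).choose 2) * (α l ^ ν) ^ ((m l).choose 2) / α l ^ ((m l).choose 2)) *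
        ∏ i : Fin s, ∏ j ∈ Finset.Ioi i, (α j ^ ν - α i ^ ν) ^ (m i * m j) := by
  classical
  set Sb : Matrix _ _ F := Matrix.of fun c c' : Σ l : Fin s, Fin (m l) =>
    (fun l => α l ^ ν) c'.1 ^ (rho m c - (c'.2 : ℕ)) *
      (((rho m c).choose (c'.2 : ℕ) : ℕ) : F) with hSb
  set U : Matrix _ _ F := Matrix.of fun c c' : Σ l : Fin s, Fin (m l) =>
    if c.1 = c'.1 then cc F ν c.2 c'.2 * α c'.1 ^ (ν * (c.2 : ℕ)) / α c'.1 ^ (c'.2 : ℕ)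
    else 0 with hU
  have hWSU : (Matrix.of fun c c' : Σ l : Fin s, Fin (m l) =>
      α c'.1 ^ (rho m c * ν - (c'.2 : ℕ)) * (((rho m c * ν).choose (c'.2 : ℕ) : ℕ) : F))
      = Sb * U := by
    ext c c'
    rw [Matrix.mul_apply, ← Finset.univ_sigma_univ, Finset.sum_sigma]
    rw [Finset.sum_eq_single_of_mem c'.1 (Finset.mem_univ _) (fun b _ hb =>
      Finset.sum_eq_zero fun u _ => by simp [hU, hb])]
    have hterm : ∀ u : Fin (m c'.1),
        Sb c ⟨c'.1, u⟩ * U ⟨c'.1, u⟩ c'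
          = ((rho m c).choose (u : ℕ) : F) * cc F ν u c'.2 *
              (α c'.1 ^ (ν * rho m c) / α c'.1 ^ (c'.2 : ℕ)) := by
      intro u
      simp only [hSb, hU, Matrix.of_apply, if_pos rfl, if_true]
      by_cases hu : (u : ℕ) ≤ rho m c
      · have h3 : ν * (rho m c - (u : ℕ)) + ν * (u : ℕ) = ν * rho m c := by
          rw [← Nat.mul_add, Nat.sub_add_cancel hu]
        rw [← pow_mul, ← h3, pow_add]
        ring
      · rw [Nat.choose_eq_zero_of_lt (by omega)]
        simp
    rw [Finset.sum_congr rfl fun u _ => hterm u, ← Finset.sum_mul]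
    have hrange : ∑ u : Fin (m c'.1), ((rho m c).choose (u : ℕ) : F) * cc F ν u c'.2
        = ((rho m c * ν).choose (c'.2 : ℕ) : F) := by
      rw [Fin.sum_univ_eq_sum_range fun u => ((rho m c).choose u : F) * cc F ν u c'.2]
      rw [choose_mul_eq_sum (rho m c) ν (c'.2 : ℕ)]
      refine (Finset.sum_subset (Finset.range_subset_range.2 c'.2.isLt) fun x _ hx => ?_).symm
      have hx' : (c'.2 : ℕ) < x := by simp only [Finset.mem_range] at hx ⊢; omega
      simp [cc_eq_zero hx']
    rw [hrange]
    by_cases ht : (c'.2 : ℕ) ≤ rho m c * ν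
    · rw [Matrix.of_apply, pow_sub₀ _ (hα0 _) ht, mul_comm (rho m c) ν]
      ring
    · rw [Matrix.of_apply, Nat.choose_eq_zero_of_lt (by omega)]
      simp
  have hlt : ∀ {c c' : Σ l : Fin s, Fin (m l)}, e c' < e c → rho m c' < rho m c := by
    intro c c' hlt
    rw [← he c, ← he c']
    exact hlt
  have hUdet : U.det = ∏ l, (ν : F) ^ ((m l).choose 2) * (α l ^ ν) ^ ((m l).choose 2) /
      α l ^ ((m l).choose 2) := by
    rw [det_tri e _ (fun c c' h => ?vanish)]
    case vanish =>
      rcases rho_lt_cases (hlt h) with h3 | ⟨h3, h4⟩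
      · have : c.1 ≠ c'.1 := ne_of_gt h3
        simp [hU, this]
      · simp [hU, cc_eq_zero h4]
    have hdiag : ∀ c : Σ l : Fin s, Fin (m l), U c c
        = (ν : F) ^ (c.2 : ℕ) * ((α c.1 ^ ν) ^ (c.2 : ℕ)) / α c.1 ^ (c.2 : ℕ) := by
      intro c
      simp only [hU, Matrix.of_apply, if_pos rfl, if_true, cc_diag, pow_mul]
    rw [Finset.prod_congr rfl fun c _ => hdiag c]
    rw [← Finset.univ_sigma_univ, Finset.prod_sigma]
    refine Finset.prod_congr rfl fun l _ => ?_
    dsimp only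
    rw [Finset.prod_div_distrib, Finset.prod_mul_distrib, prod_pow_val, prod_pow_val, prod_pow_val]
  rw [hWSU, Matrix.det_mul, hUdet, detS (fun l => α l ^ ν) e he, mul_comm]
end DetW

section Seq
variable {F : Type*} [Field F]

lemma seq_eq_coeff_mod {r : ℕ} {p : F[X]} (hmonic : p.Monic)
    (hdeg : p.natDegree = r) (Xs : ℕ → ℕ → F)
    (hrec : ∀ k < r, ∀ n : ℕ, ∑ i ∈ Finset.range (r + 1), p.coeff i * Xs k (n + i) = 0)
    (hinit : ∀ k < r, ∀ j < r, Xs k j = if j = k then 1 else 0)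
    {k : ℕ} (hk : k < r) : ∀ N, Xs k N = (((X : F[X]) ^ N) %ₘ p).coeff k := by
  intro N
  induction N using Nat.strong_induction_on with
  | _ N ih =>
  rcases lt_or_ge N r with hN | hN
  · rw [hinit k hk N hN]
    have hpd : p.degree = (r : WithBot ℕ) := by
      rw [Polynomial.degree_eq_natDegree hmonic.ne_zero, hdeg]
    rw [(Polynomial.modByMonic_eq_self_iff hmonic).2
      (by rw [Polynomial.degree_X_pow, hpd]; exact_mod_cast hN)]
    rw [Polynomial.coeff_X_pow]
    simp [eq_comm]
  · have hcoeffr : p.coeff r = 1 := by rw [← hdeg]; exact hmonic.coeff_natDegree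
    have hsum : ∑ i ∈ Finset.range (r + 1), p.coeff i • (X : F[X]) ^ (N - r + i)
        = X ^ (N - r) * p := by
      conv_rhs => rw [p.as_sum_range' (r + 1) (by omega)]
      rw [Finset.mul_sum]
      refine Finset.sum_congr rfl fun i _ => ?_
      rw [← Polynomial.C_mul_X_pow_eq_monomial, Polynomial.smul_eq_C_mul, pow_add]
      ring
    have hlin : (∑ i ∈ Finset.range (r + 1), p.coeff i • (X : F[X]) ^ (N - r + i)) %ₘ p
        = ∑ i ∈ Finset.range (r + 1), p.coeff i • ((X : F[X]) ^ (N - r + i) %ₘ p) := by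
      calc (∑ i ∈ Finset.range (r + 1), p.coeff i • (X : F[X]) ^ (N - r + i)) %ₘ p
          = Polynomial.modByMonicHom p
              (∑ i ∈ Finset.range (r + 1), p.coeff i • (X : F[X]) ^ (N - r + i)) := rfl
        _ = ∑ i ∈ Finset.range (r + 1),
              Polynomial.modByMonicHom p (p.coeff i • (X : F[X]) ^ (N - r + i)) :=
            map_sum _ _ _
        _ = _ := by simp only [_root_.map_smul]; rfl
    have hc : ∑ i ∈ Finset.range (r + 1),
        p.coeff i * (((X : F[X]) ^ (N - r + i)) %ₘ p).coeff k = 0 := by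
      have h0 : ((X : F[X]) ^ (N - r) * p) %ₘ p = 0 :=
        (Polynomial.modByMonic_eq_zero_iff_dvd hmonic).2 (dvd_mul_left p _)
      calc ∑ i ∈ Finset.range (r + 1), p.coeff i * (((X : F[X]) ^ (N - r + i)) %ₘ p).coeff k
          = (∑ i ∈ Finset.range (r + 1), p.coeff i • ((X : F[X]) ^ (N - r + i) %ₘ p)).coeff k := by
            rw [Polynomial.finset_sum_coeff]
            exact Finset.sum_congr rfl fun i _ => by
              rw [Polynomial.coeff_smul, smul_eq_mul]
        _ = (((X : F[X]) ^ (N - r) * p) %ₘ p).coeff k := by rw [← hlin, hsum]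
        _ = 0 := by rw [h0]; simp
    have h1 := hrec k hk (N - r)
    rw [Finset.sum_range_succ, hcoeffr, one_mul] at h1 hc
    have hNr : N - r + r = N := by omega
    rw [hNr] at h1 hc
    have hsame : ∑ i ∈ Finset.range r, p.coeff i * Xs k (N - r + i)
        = ∑ i ∈ Finset.range r, p.coeff i * (((X : F[X]) ^ (N - r + i)) %ₘ p).coeff k :=
      Finset.sum_congr rfl fun i hi => by
        rw [ih (N - r + i) (by simp only [Finset.mem_range] at hi; omega)]
    linear_combination h1 - hc - hsame
end Seq

section DetA
variable {F : Type*} [Field F] {s : ℕ} {m : Fin s → ℕ}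

lemma detA_eq (α : Fin s → F) (hα0 : ∀ l, α l ≠ 0) (hinj : Function.Injective α)
    {r : ℕ} (hr : r = ∑ l, m l) (n : ℕ) (hn : 1 ≤ n) :
    (Matrix.of fun h k : Fin r =>
        (((X : F[X]) ^ ((h : ℕ) * n)) %ₘ (∏ l, (X - C (α l)) ^ m l)).coeff (k : ℕ)).det
      = ((n : F) ^ (∑ l, (m l).choose 2)) *
        (∏ l, α l ^ ((m l).choose 2 * (n - 1))) *
        ∏ i : Fin s, ∏ j ∈ Finset.Ioi i,
          ((α j ^ n - α i ^ n) / (α j - α i)) ^ (m i * m j) := by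
  classical
  obtain ⟨n', rfl⟩ : ∃ n', n = n' + 1 := ⟨n - 1, by omega⟩
  set n := n' + 1 with hn2
  rcases Nat.eq_zero_or_pos r with hr0 | hr1
  · subst hr0
    have hall : ∀ l, m l = 0 := fun l =>
      (Finset.sum_eq_zero_iff.1 hr.symm) l (Finset.mem_univ l)
    rw [Matrix.det_isEmpty]
    simp [hall]
  set p : F[X] := ∏ l, (X - C (α l)) ^ m l with hp
  have hmonic : p.Monic := monic_prod_of_monic _ _ fun i _ => (monic_X_sub_C _).pow _
  have hpdeg : p.natDegree = r := by
    rw [hp, natDegree_prod_of_monic _ _ (fun i _ => (monic_X_sub_C _).pow _)]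
    simp only [(monic_X_sub_C _).natDegree_pow, natDegree_X_sub_C, mul_one]
    exact hr.symm
  have hdegQ : ∀ N : ℕ, ((X : F[X]) ^ N %ₘ p).natDegree < r := by
    intro N
    rcases eq_or_ne ((X : F[X]) ^ N %ₘ p) 0 with h | h
    · simpa [h] using hr1
    · refine (Polynomial.natDegree_lt_iff_degree_lt h).2 ?_
      have := Polynomial.degree_modByMonic_lt ((X : F[X]) ^ N) hmonic
      rwa [Polynomial.degree_eq_natDegree hmonic.ne_zero, hpdeg] at this
  -- index equiv
  have hcard : Fintype.card (Σ l : Fin s, Fin (m l)) = r := by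
    simp [Fintype.card_sigma, hr]
  have hrlt : ∀ c : Σ l : Fin s, Fin (m l), rho m c < r := fun c => hr ▸ rho_lt_sum c
  set f : (Σ l : Fin s, Fin (m l)) → Fin r := fun c => ⟨rho m c, hrlt c⟩ with hf
  have hfinj : Function.Injective f := fun a b hab =>
    rho_injective (by simpa [hf] using congrArg Fin.val hab)
  set e := Equiv.ofBijective f ((Fintype.bijective_iff_injective_and_card f).2 ⟨hfinj, by simp [hcard]⟩)
    with hee
  have he : ∀ c, ((e c) : ℕ) = rho m c := fun c => rfl
  -- matrices over the sigma type
  set T : Matrix _ _ F := Matrix.of fun c c' : Σ l : Fin s, Fin (m l) =>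
    α c'.1 ^ (rho m c * 1 - (c'.2 : ℕ)) * (((rho m c * 1).choose (c'.2 : ℕ) : ℕ) : F) with hT
  set Wn : Matrix _ _ F := Matrix.of fun c c' : Σ l : Fin s, Fin (m l) =>
    α c'.1 ^ (rho m c * n - (c'.2 : ℕ)) * (((rho m c * n).choose (c'.2 : ℕ) : ℕ) : F) with hWn
  set A' : Matrix _ _ F := (Matrix.of fun h k : Fin r =>
      (((X : F[X]) ^ ((h : ℕ) * n)) %ₘ p).coeff (k : ℕ)).submatrix e e with hA'
  -- key evaluation
  have key : ∀ (N : ℕ) (c' : Σ l : Fin s, Fin (m l)),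
      (∑ c'' : Σ l : Fin s, Fin (m l), ((X : F[X]) ^ N %ₘ p).coeff (rho m c'') *
        (α c'.1 ^ (rho m c'' - (c'.2 : ℕ)) * (((rho m c'').choose (c'.2 : ℕ) : ℕ) : F)))
      = α c'.1 ^ (N - (c'.2 : ℕ)) * ((N.choose (c'.2 : ℕ) : ℕ) : F) := by
    intro N c'
    have h1 : (∑ c'' : Σ l : Fin s, Fin (m l), ((X : F[X]) ^ N %ₘ p).coeff (rho m c'') *
        (α c'.1 ^ (rho m c'' - (c'.2 : ℕ)) * (((rho m c'').choose (c'.2 : ℕ) : ℕ) : F)))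
        = (Polynomial.taylor (α c'.1) ((X : F[X]) ^ N %ₘ p)).coeff (c'.2 : ℕ) := by
      rw [taylor_coeff_sum (R := r) _ _ (hdegQ N) _]
      rw [← Equiv.sum_comp e (fun k : Fin r => ((X : F[X]) ^ N %ₘ p).coeff (k : ℕ) *
        (α c'.1 ^ ((k : ℕ) - (c'.2 : ℕ)) * (((k : ℕ).choose (c'.2 : ℕ) : ℕ) : F)))]
      exact Finset.sum_congr rfl fun c'' _ => by rw [he c'']
    have hdvd : (X - C (α c'.1)) ^ (m c'.1) ∣ p * ((X : F[X]) ^ N /ₘ p) :=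
      Dvd.dvd.mul_right (Finset.dvd_prod_of_mem _ (Finset.mem_univ c'.1)) _
    have h2 : (Polynomial.taylor (α c'.1) ((X : F[X]) ^ N %ₘ p)).coeff (c'.2 : ℕ)
        = (Polynomial.taylor (α c'.1) ((X : F[X]) ^ N)).coeff (c'.2 : ℕ) := by
      conv_rhs => rw [← Polynomial.modByMonic_add_div ((X : F[X]) ^ N) p]
      rw [map_add, Polynomial.coeff_add,
        taylor_coeff_zero_of_dvd c'.2.isLt hdvd, add_zero]
    have h3 : (Polynomial.taylor (α c'.1) ((X : F[X]) ^ N)).coeff (c'.2 : ℕ)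
        = α c'.1 ^ (N - (c'.2 : ℕ)) * ((N.choose (c'.2 : ℕ) : ℕ) : F) := by
      rw [Polynomial.taylor_apply, Polynomial.X_pow_comp,
        Polynomial.coeff_X_add_C_pow]
    exact h1.trans (h2.trans h3)
  have hAT : A' * T = Wn := by
    ext c c'
    simp only [hA', hT, hWn, Matrix.mul_apply, Matrix.submatrix_apply, Matrix.of_apply, he,
      mul_one]
    exact key (rho m c * n) c'
  have hdetAT : A'.det * T.det = Wn.det := by rw [← Matrix.det_mul, hAT]
  have hTdet : T.det = ∏ i : Fin s, ∏ j ∈ Finset.Ioi i, (α j - α i) ^ (m i * m j) := by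
    rw [hT, detW α hα0 e he 1]
    simp only [Nat.cast_one, one_pow, pow_one]
    rw [Finset.prod_congr rfl fun l (_ : l ∈ Finset.univ) => by
      rw [one_mul, div_self (pow_ne_zero _ (hα0 l))], Finset.prod_const_one, one_mul]
  have hTne : T.det ≠ 0 := by
    rw [hTdet]
    refine Finset.prod_ne_zero_iff.2 fun i _ => Finset.prod_ne_zero_iff.2 fun j hj =>
      pow_ne_zero _ (sub_ne_zero.2 fun hEq => (Finset.mem_Ioi.1 hj).ne' (hinj hEq))
  have hgoalA : (Matrix.of fun h k : Fin r =>
      (((X : F[X]) ^ ((h : ℕ) * n)) %ₘ p).coeff (k : ℕ)).det = A'.det :=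
    (Matrix.det_submatrix_equiv_self e _).symm
  rw [hgoalA]
  have hA'det : A'.det = Wn.det / T.det := by rw [eq_div_iff hTne]; exact hdetAT
  rw [hA'det, div_eq_iff hTne, eq_comm, hTdet, hWn, detW α hα0 e he n]
  have hpair : (∏ i : Fin s, ∏ j ∈ Finset.Ioi i,
        ((α j ^ n - α i ^ n) / (α j - α i)) ^ (m i * m j)) *
      (∏ i : Fin s, ∏ j ∈ Finset.Ioi i, (α j - α i) ^ (m i * m j))
      = ∏ i : Fin s, ∏ j ∈ Finset.Ioi i, (α j ^ n - α i ^ n) ^ (m i * m j) := by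
    rw [← Finset.prod_mul_distrib]
    refine Finset.prod_congr rfl fun i _ => ?_
    rw [← Finset.prod_mul_distrib]
    refine Finset.prod_congr rfl fun j hj => ?_
    rw [div_pow, div_mul_cancel₀]
    exact pow_ne_zero _ (sub_ne_zero.2 fun hEq => (Finset.mem_Ioi.1 hj).ne' (hinj hEq))
  have hfirst : (n : F) ^ (∑ l, (m l).choose 2) * (∏ l, α l ^ ((m l).choose 2 * (n - 1)))
      = ∏ l, ((n : F) ^ ((m l).choose 2) * (α l ^ n) ^ ((m l).choose 2) /
          α l ^ ((m l).choose 2)) := by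
    rw [← Finset.prod_pow_eq_pow_sum, ← Finset.prod_mul_distrib]
    refine Finset.prod_congr rfl fun l _ => ?_
    rw [mul_div_assoc]
    congr 1
    rw [eq_div_iff (pow_ne_zero _ (hα0 l)), ← pow_mul, ← pow_add]
    congr 1
    simp only [hn2]
    simp only [Nat.add_sub_cancel]
    ring
  rw [mul_assoc, hpair, hfirst]
end DetA


/-- For the impulse sequences of a non-degenerate linear recurrence of order `r`
with characteristic polynomial `∏ (x - α_l)^{m_l}`, the determinant
`D = det(X_{hn}^{(k)})_{1 ≤ h,k ≤ r-1}` equals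
`n^{Σ C(m_l,2)} · ∏ α_l^{C(m_l,2)(n-1)} · ∏_{i<j} ((α_j^n - α_i^n)/(α_j - α_i))^{m_i m_j}`. -/
theorem det_impulse_eval
    {F : Type*} [Field F] [CharZero F]
    (s : ℕ) (m : Fin s → ℕ) (hm : ∀ l, 0 < m l)
    (r : ℕ) (hr : r = ∑ l, m l)
    (α : Fin s → F) (hα0 : ∀ l, α l ≠ 0) (hinj : Function.Injective α)
    (hnd : ∀ i j : Fin s, i ≠ j → ∀ k : ℕ, 1 ≤ k → (α i / α j) ^ k ≠ 1)
    (X : ℕ → ℕ → F)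
    (hXrec : ∀ k < r, ∀ n : ℕ,
      ∑ i ∈ Finset.range (r + 1),
        (∏ l, (Polynomial.X - Polynomial.C (α l)) ^ m l : Polynomial F).coeff i * X k (n + i) = 0)
    (hXinit : ∀ k < r, ∀ j < r, X k j = if j = k then 1 else 0)
    (n : ℕ) (hn : 1 ≤ n) :
    Matrix.det (Matrix.of fun h k : Fin (r - 1) =>
        X ((k : ℕ) + 1) (((h : ℕ) + 1) * n)) =
      ((n : F) ^ (∑ l, (m l).choose 2)) *
        (∏ l, α l ^ ((m l).choose 2 * (n - 1))) *
        ∏ i : Fin s, ∏ j ∈ Finset.Ioi i,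
          ((α j ^ n - α i ^ n) / (α j - α i)) ^ (m i * m j) := by
  classical
  set p : F[X] := ∏ l, (Polynomial.X - Polynomial.C (α l)) ^ m l with hp
  have hmonic : p.Monic := monic_prod_of_monic _ _ fun i _ => (monic_X_sub_C _).pow _
  have hpdeg : p.natDegree = r := by
    rw [hp, natDegree_prod_of_monic _ _ (fun i _ => (monic_X_sub_C _).pow _)]
    simp only [(monic_X_sub_C _).natDegree_pow, natDegree_X_sub_C, mul_one]
    exact hr.symm
  have hXmod : ∀ k, k < r → ∀ N, X k N = (((Polynomial.X : F[X]) ^ N) %ₘ p).coeff k :=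
    fun k hk => seq_eq_coeff_mod hmonic hpdeg X hXrec hXinit hk
  rcases Nat.eq_zero_or_pos r with hr0 | hr1
  · subst hr0
    haveI : IsEmpty (Fin s) := ⟨fun l =>
      absurd ((Finset.sum_eq_zero_iff.1 hr.symm) l (Finset.mem_univ l)) (hm l).ne'⟩
    haveI : IsEmpty (Fin (0 - 1)) := ⟨fun x => Nat.not_lt_zero _ x.2⟩
    rw [Matrix.det_isEmpty, Finset.univ_eq_empty, Finset.sum_empty, Finset.prod_empty,
      Finset.prod_empty, pow_zero, one_mul, one_mul]
  · obtain ⟨N, rfl⟩ : ∃ N, r = N + 1 := ⟨r - 1, by omega⟩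
    show (Matrix.of fun h k : Fin N => X ((k : ℕ) + 1) (((h : ℕ) + 1) * n)).det = _
    set A : Matrix (Fin (N + 1)) (Fin (N + 1)) F := Matrix.of fun h k : Fin (N + 1) =>
      (((Polynomial.X : F[X]) ^ ((h : ℕ) * n)) %ₘ p).coeff (k : ℕ) with hA
    have hA0 : ∀ j : Fin (N + 1), A 0 j = if (j : ℕ) = 0 then 1 else 0 := by
      intro j
      simp only [hA, Matrix.of_apply]
      rw [show ((0 : Fin (N + 1)) : ℕ) * n = 0 from by simp, pow_zero]
      rw [(Polynomial.modByMonic_eq_self_iff hmonic).2 (by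
        rw [Polynomial.degree_one, Polynomial.degree_eq_natDegree hmonic.ne_zero, hpdeg]
        exact_mod_cast hr1)]
      simp [Polynomial.coeff_one]
    have hdetA : A.det = (A.submatrix Fin.succ Fin.succ).det := by
      rw [Matrix.det_succ_row_zero]
      rw [Finset.sum_eq_single 0 (fun j _ hj => by
        rw [hA0 j, if_neg (fun h0 => hj (Fin.ext (by rw [h0]; simp)))]
        ring) (fun h => absurd (Finset.mem_univ _) h)]
      simp [hA0, Fin.succAbove_zero]
    have hLHS : (Matrix.of fun h k : Fin N => X ((k : ℕ) + 1) (((h : ℕ) + 1) * n))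
        = A.submatrix Fin.succ Fin.succ := by
      ext h k
      simp only [hA, Matrix.of_apply, Matrix.submatrix_apply, Fin.val_succ]
      exact hXmod ((k : ℕ) + 1) (by omega) (((h : ℕ) + 1) * n)
    rw [hLHS, ← hdetA, hA, hp]
    exact detA_eq α hα0 hinj hr n hn
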